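/- arXiv:math/0112103 — 4 statements merged into one kernel-verified Lean document; each statement's English description precedes it below -/
import Mathlib

section
/- Let m = (m_{ij}(x)) be a family of d×d matrices of positive reals depending on x ∈ [0,1], let β̄ be a direction matrix satisfying β̄'_{ij} = b l_i m_{ij}(y) r_j where l, r are positive left/right eigenvectors of m(y) for the eigenvalue ρ(y) and b = (ρ(y)⟨l,r⟩)^{-1}, i.e., β̄ is a fixed point of the map S at the point y where φ(·, β̄) attains its minimum. Then φ(y, β̄) = ρ(y), where φ(x, β) = ψ(β)·∏_{i,j} m_{ij}(x)^{β_{ij}} and ψ(β) = ∏_{i,k} ((∑_j β_{ij})/β_{ik})^{β_{ik}}. -/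
open Finset

/-- at a fixed point `β̄` of the map `S` (built from the positive
left/right Perron eigenvectors of `m(y)`), one has `φ(y, β̄) = ρ(y)`, where
`φ(x,β) = ψ(β) ∏_{i,j} m_{ij}(x)^{β_{ij}}` and
`ψ(β) = ∏_{i,k} ((∑_j β_{ij})/β_{ik})^{β_{ik}}` (convention `0^0 = 1`, realised by
`Real.rpow`). -/
theorem stmt_6 (d : ℕ) (hd : 1 ≤ d) (m : ℝ → Fin d → Fin d → ℝ) (y : ℝ)
    (hy : y ∈ Set.Icc (0 : ℝ) 1) (hm : ∀ i j, 0 < m y i j)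
    (ρ : ℝ) (hρ : 0 < ρ) (l r : Fin d → ℝ)
    (hl : ∀ i, 0 < l i) (hr : ∀ i, 0 < r i)
    (hleft : ∀ j, ∑ i, l i * m y i j = ρ * l j)
    (hright : ∀ i, ∑ j, m y i j * r j = ρ * r i)
    (b : ℝ) (hb : b = (ρ * ∑ i, l i * r i)⁻¹)
    (β : Fin d → Fin d → ℝ) (hβ : ∀ i j, β i j = b * l i * m y i j * r j)
    (ψ : ℝ) (hψ : ψ = ∏ i, ∏ k, ((∑ j, β i j) / β i k) ^ β i k) :
    ψ * ∏ i, ∏ j, m y i j ^ β i j = ρ := by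
  have hne : (Finset.univ : Finset (Fin d)).Nonempty := ⟨⟨0, hd⟩, Finset.mem_univ _⟩
  have hlr : 0 < ∑ i, l i * r i :=
    Finset.sum_pos (fun i _ => mul_pos (hl i) (hr i)) hne
  have hbpos : 0 < b := by rw [hb]; positivity
  have hβpos : ∀ i j, 0 < β i j := fun i j => by
    rw [hβ]; exact mul_pos (mul_pos (mul_pos hbpos (hl i)) (hm i j)) (hr j)
  have hrow : ∀ i, ∑ j, β i j = ρ * b * l i * r i := fun i => by
    calc ∑ j, β i j = ∑ j, (b * l i) * (m y i j * r j) :=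
          Finset.sum_congr rfl fun j _ => by rw [hβ]; ring
    _ = (b * l i) * ∑ j, m y i j * r j := by rw [Finset.mul_sum]
    _ = ρ * b * l i * r i := by rw [hright i]; ring
  have hcol : ∀ k, ∑ i, β i k = ρ * b * l k * r k := fun k => by
    calc ∑ i, β i k = ∑ i, (b * r k) * (l i * m y i k) :=
          Finset.sum_congr rfl fun i _ => by rw [hβ]; ring
    _ = (b * r k) * ∑ i, l i * m y i k := by rw [Finset.mul_sum]
    _ = ρ * b * l k * r k := by rw [hleft k]; ring
  have htot : ∑ i, ∑ j, β i j = 1 := by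
    have h1 : ∑ i, ∑ j, β i j = ρ * b * ∑ i, l i * r i := by
      rw [Finset.mul_sum]
      exact Finset.sum_congr rfl fun i _ => by rw [hrow i]; ring
    rw [h1, hb]
    field_simp
  have hratio : ∀ i k, (∑ j, β i j) / β i k = ρ * r i / (m y i k * r k) := fun i k => by
    rw [hrow i, hβ i k]
    field_simp [hbpos.ne', (hl i).ne', (hm i k).ne', (hr k).ne']
  have hratpos : ∀ i k, 0 < ρ * r i / (m y i k * r k) := fun i k =>
    div_pos (mul_pos hρ (hr i)) (mul_pos (hm i k) (hr k))
  have hψeq : ψ = ∏ i, ∏ k, (ρ * r i / r k) ^ β i k * (m y i k) ^ (-(β i k)) := by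
    rw [hψ]
    refine Finset.prod_congr rfl fun i _ => Finset.prod_congr rfl fun k _ => ?_
    rw [hratio i k]
    have : ρ * r i / (m y i k * r k) = (ρ * r i / r k) * (m y i k)⁻¹ := by
      field_simp
    rw [this, Real.mul_rpow (div_pos (mul_pos hρ (hr i)) (hr k)).le
        (inv_pos.mpr (hm i k)).le,
      Real.inv_rpow (hm i k).le, ← Real.rpow_neg (hm i k).le]
  have hLHS : ψ * ∏ i, ∏ j, m y i j ^ β i j = ∏ i, ∏ k, (ρ * r i / r k) ^ β i k := by
    rw [hψeq, ← Finset.prod_mul_distrib]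
    refine Finset.prod_congr rfl fun i _ => ?_
    rw [← Finset.prod_mul_distrib]
    refine Finset.prod_congr rfl fun k _ => ?_
    rw [mul_assoc, ← Real.rpow_add (hm i k), neg_add_cancel, Real.rpow_zero, mul_one]
  rw [hLHS]
  have hppos : ∀ i k, (0:ℝ) < (ρ * r i / r k) ^ β i k := fun i k =>
    Real.rpow_pos_of_pos (div_pos (mul_pos hρ (hr i)) (hr k)) _
  have hPpos : 0 < ∏ i, ∏ k, (ρ * r i / r k) ^ β i k :=
    Finset.prod_pos fun i _ => Finset.prod_pos fun k _ => hppos i k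
  have hlog : Real.log (∏ i, ∏ k, (ρ * r i / r k) ^ β i k) = Real.log ρ := by
    rw [Real.log_prod (fun i _ => (Finset.prod_pos fun k _ => hppos i k).ne')]
    have h1 : ∀ i, Real.log (∏ k, (ρ * r i / r k) ^ β i k)
        = ∑ k, β i k * (Real.log ρ + Real.log (r i) - Real.log (r k)) := by
      intro i
      rw [Real.log_prod (fun k _ => (hppos i k).ne')]
      refine Finset.sum_congr rfl fun k _ => ?_
      rw [Real.log_rpow (div_pos (mul_pos hρ (hr i)) (hr k)),
        Real.log_div (mul_pos hρ (hr i)).ne' (hr k).ne',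
        Real.log_mul hρ.ne' (hr i).ne']
    rw [Finset.sum_congr rfl fun i _ => h1 i]
    have expand : ∑ i, ∑ k, β i k * (Real.log ρ + Real.log (r i) - Real.log (r k))
        = (∑ i, ∑ k, β i k) * Real.log ρ
          + ∑ i, (∑ k, β i k) * Real.log (r i)
          - ∑ i, ∑ k, β i k * Real.log (r k) := by
      rw [Finset.sum_mul]
      rw [← Finset.sum_add_distrib, ← Finset.sum_sub_distrib]
      refine Finset.sum_congr rfl fun i _ => ?_
      rw [Finset.sum_mul, Finset.sum_mul, ← Finset.sum_add_distrib,
        ← Finset.sum_sub_distrib]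
      exact Finset.sum_congr rfl fun k _ => by ring
    rw [expand, htot, one_mul]
    have h3 : ∑ i, ∑ k, β i k * Real.log (r k)
        = ∑ k, (∑ i, β i k) * Real.log (r k) := by
      rw [Finset.sum_comm]
      exact Finset.sum_congr rfl fun k _ => by rw [Finset.sum_mul]
    rw [h3]
    have h4 : ∑ i, (∑ k, β i k) * Real.log (r i)
        = ∑ k, (∑ i, β i k) * Real.log (r k) :=
      Finset.sum_congr rfl fun i _ => by rw [hrow i, hcol i]
    rw [h4]
    ring
  calc ∏ i, ∏ k, (ρ * r i / r k) ^ β i k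
      = Real.exp (Real.log (∏ i, ∏ k, (ρ * r i / r k) ^ β i k)) :=
        (Real.exp_log hPpos).symm
    _ = Real.exp (Real.log ρ) := by rw [hlog]
    _ = ρ := Real.exp_log hρ
end

section
/- Let (X_n) be a real-valued process adapted to a filtration (F_n) with X_0 = x, whose increments Y_n = X_n − X_{n−1} satisfy |Y_n| ≤ a almost surely for a constant a > 0, and which is a strong submartingale: E(Y_n | F_{n−1}) ≥ ε almost surely for some ε > 0 and all n. Then there exists δ₁ = δ₁(ε, a) > 0 such that for all 0 < δ < δ₁, the stopping time τ(δ) = inf{n ≥ 1 : X_n < x + nδ} satisfies P(τ(δ) = ∞) > 0. -/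
open MeasureTheory Filter

private lemma exp_le_quad {u : ℝ} (hu : |u| ≤ 1) : Real.exp u ≤ 1 + u + u ^ 2 := by
  have h := Real.exp_bound hu (n := 2) (by norm_num)
  have hsum : (∑ i ∈ Finset.range 2, u ^ i / i.factorial) = 1 + u := by
    simp [Finset.sum_range_succ]
  rw [hsum] at h
  have h2 : Real.exp u - (1 + u) ≤ |u| ^ 2 * ((Nat.succ 2 : ℝ) / ((Nat.factorial 2 : ℝ) * 2)) := by
    have := (abs_le.1 h).2
    exact_mod_cast this
  have h3 : |u| ^ 2 = u ^ 2 := sq_abs u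
  have h4 : ((Nat.succ 2 : ℝ) / ((Nat.factorial 2 : ℝ) * 2)) = 3 / 4 := by
    norm_num [Nat.factorial]
  rw [h4, h3] at h2
  nlinarith [sq_nonneg u]

private lemma stmt7_key {Ω : Type*} {mΩ : MeasurableSpace Ω} {μ : Measure Ω}
    [IsProbabilityMeasure μ] (F : Filtration ℕ mΩ)
    (X : ℕ → Ω → ℝ) (hadp : Adapted F X)
    (hint : ∀ n, Integrable (X n) μ)
    (a ε b ρ : ℝ) (ha : 0 < a) (hε : 0 < ε) (hb_pos : 0 < b)
    (hba : b * a ≤ 1 / 2)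
    (hρ_eq : ρ = 1 - b * ε + b ^ 2 * a ^ 2)
    (Y : ℕ → Ω → ℝ) (hY : Y = fun n ω => X (n + 1) ω - X n ω)
    (hbdd : ∀ n : ℕ, ∀ᵐ ω ∂μ, |X (n + 1) ω - X n ω| ≤ a)
    (hsub : ∀ n : ℕ, ∀ᵐ ω ∂μ,
      ε ≤ (μ[(fun ω' => X (n + 1) ω' - X n ω') | F n]) ω)
    :
    ∀ n : ℕ, ∀ᵐ ω ∂μ,
      (μ[(fun ω' => Real.exp (-(b * Y n ω'))) | F n]) ω ≤ ρ := by
  subst hY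
  beta_reduce
  have hY_int : ∀ n, Integrable (fun ω => X (n + 1) ω - X n ω) μ :=
    fun n => (hint (n + 1)).sub (hint n)
  intro n
  have hbdd' := hbdd n
  have hYm : StronglyMeasurable (fun ω => X (n + 1) ω - X n ω) :=
    ((hadp.stronglyAdapted (n + 1)).mono (F.le _)).sub ((hadp.stronglyAdapted n).mono (F.le _))
  have hEm : StronglyMeasurable (fun ω => Real.exp (-(b * (X (n + 1) ω - X n ω)))) :=
    Real.continuous_exp.comp_stronglyMeasurable ((hYm.const_mul b).neg)
  have hE_int : Integrable (fun ω => Real.exp (-(b * (X (n + 1) ω - X n ω)))) μ := by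
    refine Integrable.mono' (integrable_const (Real.exp (b * a))) hEm.aestronglyMeasurable ?_
    filter_upwards [hbdd'] with ω hω
    rw [Real.norm_eq_abs, Real.abs_exp]
    refine Real.exp_le_exp.2 ?_
    have := abs_le.1 hω
    nlinarith
  have hg_int : Integrable (fun ω => 1 + b ^ 2 * a ^ 2 + (-b) * (X (n + 1) ω - X n ω)) μ :=
    (integrable_const _).add ((hY_int n).const_mul _)
  have hle : (fun ω => Real.exp (-(b * (X (n + 1) ω - X n ω)))) ≤ᵐ[μ]
      fun ω => 1 + b ^ 2 * a ^ 2 + (-b) * (X (n + 1) ω - X n ω) := by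
    filter_upwards [hbdd'] with ω hω
    have habs := abs_le.1 hω
    have hu : |(-(b * (X (n + 1) ω - X n ω)))| ≤ 1 := by
      rw [abs_neg, abs_mul, abs_of_pos hb_pos]
      nlinarith [abs_nonneg (X (n + 1) ω - X n ω)]
    have h1 := exp_le_quad hu
    have hsq : (X (n + 1) ω - X n ω) ^ 2 ≤ a ^ 2 := by nlinarith
    nlinarith [mul_nonneg (sq_nonneg b) (sub_nonneg.2 hsq)]
  have hc := condExp_mono (m := (F n : MeasurableSpace Ω)) hE_int hg_int hle
  have hg1 := condExp_add (μ := μ) (m := F n) (integrable_const (1 + b ^ 2 * a ^ 2))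
    ((hY_int n).const_mul (-b))
  have hg2 := condExp_smul (μ := μ) (m := F n) (𝕜 := ℝ) (-b)
    (fun ω => X (n + 1) ω - X n ω)
  have hgc : μ[(fun _ : Ω => 1 + b ^ 2 * a ^ 2) | F n] = fun _ => 1 + b ^ 2 * a ^ 2 :=
    condExp_const (F.le n) _
  filter_upwards [hc, hg1, hg2, hsub n] with ω h1 h2 h3 h4
  have he2 : (fun x : Ω => -b * (X (n + 1) x - X n x)) =
      (-b) • (fun ω => X (n + 1) ω - X n ω) := by
    funext ω'; simp [smul_eq_mul]
  have he : (fun ω : Ω => 1 + b ^ 2 * a ^ 2 + -b * (X (n + 1) ω - X n ω)) =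
      (fun _ : Ω => 1 + b ^ 2 * a ^ 2) + fun x : Ω => -b * (X (n + 1) x - X n x) := by
    funext ω'; simp
  rw [he, h2] at h1
  simp only [Pi.add_apply, hgc] at h1
  rw [he2, h3] at h1
  simp only [Pi.smul_apply, smul_eq_mul] at h1
  have hmul : (-b) * ε ≥ (-b) * (μ[(fun ω' => X (n + 1) ω' - X n ω') | F n]) ω := by
    nlinarith
  calc (μ[(fun ω' => Real.exp (-(b * (X (n + 1) ω' - X n ω')))) | F n]) ω
      ≤ 1 + b ^ 2 * a ^ 2 + (-b) * (μ[(fun ω' => X (n + 1) ω' - X n ω') | F n]) ω := h1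
    _ ≤ 1 + b ^ 2 * a ^ 2 + (-b) * ε := by linarith
    _ = ρ := by rw [hρ_eq]; ring

private lemma stmt7_main {Ω : Type*} {mΩ : MeasurableSpace Ω} {μ : Measure Ω}
    [IsProbabilityMeasure μ] (F : Filtration ℕ mΩ)
    (X : ℕ → Ω → ℝ) (hadp : Adapted F X)
    (hint : ∀ n, Integrable (X n) μ)
    (x a ε b ρ δ : ℝ) (ha : 0 < a) (hε : 0 < ε) (hb_pos : 0 < b)
    (hρ_pos : 0 < ρ)
    (hX0 : ∀ ω, X 0 ω = x)
    (hbdd : ∀ n : ℕ, ∀ᵐ ω ∂μ, |X (n + 1) ω - X n ω| ≤ a)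
    (hkey : ∀ n : ℕ, ∀ᵐ ω ∂μ,
      (μ[(fun ω' => Real.exp (-(b * (X (n + 1) ω' - X n ω')))) | F n]) ω ≤ ρ)
    (hE_int : ∀ n : ℕ, Integrable (fun ω => Real.exp (-(b * (X (n + 1) ω - X n ω)))) μ)
    (hδ0 : 0 < δ) (hbδρ : b * δ < 1 - ρ) :
    0 < μ {ω | ∀ n : ℕ, 1 ≤ n → x + n * δ ≤ X n ω} := by
  classical
  set r : ℝ := Real.exp (b * δ) * ρ with hr_def
  have hr_pos : 0 < r := mul_pos (Real.exp_pos _) hρ_pos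
  have hbδ1 : b * δ < 1 := by linarith
  have hr_lt1 : r < 1 := by
    have h1 : 1 - b * δ ≤ Real.exp (-(b * δ)) := by
      have := Real.add_one_le_exp (-(b * δ)); linarith
    have h2 : Real.exp (b * δ) * (1 - b * δ) ≤ 1 := by
      have := mul_le_mul_of_nonneg_left h1 (Real.exp_pos (b * δ)).le
      rwa [← Real.exp_add, add_neg_cancel, Real.exp_zero] at this
    have h3 : Real.exp (b * δ) * ρ < Real.exp (b * δ) * (1 - b * δ) :=
      mul_lt_mul_of_pos_left (by linarith) (Real.exp_pos _)
    linarith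
  have hr_inv1 : 1 ≤ r⁻¹ := (one_le_inv₀ hr_pos).2 hr_lt1.le
  -- the exponential supermartingale
  set T : ℕ → Ω → ℝ := fun n ω => r⁻¹ ^ n * Real.exp (-(b * (X n ω - x - δ * n))) with hT_def
  have hT_nonneg : ∀ n ω, 0 ≤ T n ω := fun n ω => by positivity
  have hT0 : ∀ ω, T 0 ω = 1 := by
    intro ω; simp [hT_def, hX0 ω]
  have hTadp : StronglyAdapted F T := by
    intro n
    exact (Real.continuous_exp.comp_stronglyMeasurable
      ((((hadp.stronglyAdapted n).sub stronglyMeasurable_const).sub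
        stronglyMeasurable_const).const_mul b).neg).const_mul _
  have hXb : ∀ n : ℕ, ∀ᵐ ω ∂μ, |X n ω - x| ≤ n * a := by
    intro n
    induction n with
    | zero => filter_upwards with ω; simp [hX0 ω]
    | succ k ih =>
      filter_upwards [ih, hbdd k] with ω h1 h2
      have : X (k + 1) ω - x = (X (k + 1) ω - X k ω) + (X k ω - x) := by ring
      rw [this]
      calc |(X (k + 1) ω - X k ω) + (X k ω - x)| ≤ |X (k + 1) ω - X k ω| + |X k ω - x| :=
            abs_add_le _ _
        _ ≤ a + k * a := add_le_add h2 h1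
        _ = (k + 1 : ℕ) * a := by push_cast; ring
  have hT_int : ∀ n, Integrable (T n) μ := by
    intro n
    refine Integrable.mono' (integrable_const (r⁻¹ ^ n * Real.exp (b * (n * a + δ * n))))
      (((hTadp n).mono (F.le n)).aestronglyMeasurable) ?_
    filter_upwards [hXb n] with ω hω
    rw [Real.norm_eq_abs, abs_of_nonneg (hT_nonneg n ω)]
    refine mul_le_mul_of_nonneg_left (Real.exp_le_exp.2 ?_) (by positivity)
    have := abs_le.1 hω
    nlinarith
  have hT_super : Supermartingale T F μ := by
    refine supermartingale_nat hTadp hT_int fun n => ?_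
    have hfac : T (n + 1) = fun ω =>
        (r⁻¹ ^ n * Real.exp (-(b * (X n ω - x - δ * n))) * (r⁻¹ * Real.exp (b * δ))) *
          Real.exp (-(b * (X (n + 1) ω - X n ω))) := by
      funext ω
      show r⁻¹ ^ (n + 1) * Real.exp (-(b * (X (n + 1) ω - x - δ * ((n : ℕ) + 1 : ℕ)))) = _
      rw [pow_succ]
      rw [show (-(b * (X (n + 1) ω - x - δ * ((n : ℕ) + 1 : ℕ)))) =
        (-(b * (X n ω - x - δ * n)) + b * δ) + (-(b * (X (n + 1) ω - X n ω))) by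
          push_cast; ring]
      rw [Real.exp_add, Real.exp_add]
      ring
    have hGm : StronglyMeasurable[F n] (fun ω =>
        r⁻¹ ^ n * Real.exp (-(b * (X n ω - x - δ * n))) * (r⁻¹ * Real.exp (b * δ))) :=
      (hTadp n).mul_const _
    have hpull := condExp_mul_of_stronglyMeasurable_left (μ := μ) hGm
      (by rw [show ((fun ω => r⁻¹ ^ n * Real.exp (-(b * (X n ω - x - δ * n))) *
          (r⁻¹ * Real.exp (b * δ))) * (fun ω => Real.exp (-(b * (X (n + 1) ω - X n ω))))) =
          T (n + 1) from (funext fun ω => (congrFun hfac ω).symm)]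
          exact hT_int (n + 1))
      (hE_int n)
    have : μ[T (n + 1) | F n] =ᵐ[μ] μ[(fun ω => r⁻¹ ^ n *
        Real.exp (-(b * (X n ω - x - δ * n))) * (r⁻¹ * Real.exp (b * δ))) *
        (fun ω => Real.exp (-(b * (X (n + 1) ω - X n ω)))) | F n] := by
      rw [show ((fun ω => r⁻¹ ^ n * Real.exp (-(b * (X n ω - x - δ * n))) *
          (r⁻¹ * Real.exp (b * δ))) * (fun ω => Real.exp (-(b * (X (n + 1) ω - X n ω))))) =
          T (n + 1) from (funext fun ω => (congrFun hfac ω).symm)]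
    filter_upwards [this, hpull, hkey n] with ω h1 h2 h3
    rw [h1, h2]
    simp only [Pi.mul_apply]
    have hG_nonneg : 0 ≤ r⁻¹ ^ n * Real.exp (-(b * (X n ω - x - δ * n))) *
        (r⁻¹ * Real.exp (b * δ)) := by positivity
    calc r⁻¹ ^ n * Real.exp (-(b * (X n ω - x - δ * n))) * (r⁻¹ * Real.exp (b * δ)) *
          (μ[(fun ω' => Real.exp (-(b * (X (n + 1) ω' - X n ω')))) | F n]) ω
        ≤ r⁻¹ ^ n * Real.exp (-(b * (X n ω - x - δ * n))) * (r⁻¹ * Real.exp (b * δ)) * ρ :=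
          mul_le_mul_of_nonneg_left h3 hG_nonneg
      _ = T n ω := by
          have h9 : r⁻¹ * Real.exp (b * δ) * ρ = 1 := by
            rw [hr_def, mul_inv]
            field_simp
          show _ = r⁻¹ ^ n * Real.exp (-(b * (X n ω - x - δ * n)))
          rw [mul_assoc (r⁻¹ ^ n * Real.exp (-(b * (X n ω - x - δ * n))))
            (r⁻¹ * Real.exp (b * δ)) ρ, show (r⁻¹ * Real.exp (b * δ)) * ρ = 1 from h9, mul_one]
  -- hitting time bound
  set Z : ℕ → Ω → ℝ := fun n ω => X n ω - x - δ * n with hZ_def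
  have hZadp : Adapted F Z := fun n =>
    ((hadp n).sub measurable_const).sub measurable_const
  have hMeasX : ∀ n, Measurable (X n) := fun n => (hadp n).mono (F.le n) le_rfl
  set A : ℕ → Set Ω := fun N => ⋃ n ∈ Set.Icc 1 N, {ω | X n ω < x + n * δ} with hA_def
  have hA_meas : ∀ N, MeasurableSet (A N) := fun N =>
    MeasurableSet.biUnion (Set.to_countable _) fun n _ =>
      measurableSet_lt (hMeasX n) measurable_const
  have hAbound : ∀ N : ℕ, 1 ≤ N → μ (A N) ≤ ENNReal.ofReal r := by
    intro N hN1
    set τ : Ω → ℕ := hittingBtwn Z (Set.Iio (0 : ℝ)) 1 N with hτ_def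
    have hτst : IsStoppingTime F (τ ·) := hZadp.isStoppingTime_hittingBtwn measurableSet_Iio
    have hτ_le : ∀ ω, τ ω ≤ N := fun ω => hittingBtwn_le ω
    have h0st : IsStoppingTime F (fun _ : Ω => ((0 : ℕ) : WithTop ℕ)) := isStoppingTime_const F 0
    have heval := hT_super.neg.expected_stoppedValue_mono h0st hτst
      (fun ω => WithTop.coe_le_coe.2 (Nat.zero_le _)) (fun ω => WithTop.coe_le_coe.2 (hτ_le ω))
    have hsv0 : stoppedValue (-T) (fun _ : Ω => ((0 : ℕ) : WithTop ℕ)) = fun _ => (-1 : ℝ) := by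
      funext ω; simp [stoppedValue, hT0 ω]
    have hsvτ : stoppedValue (-T) (τ ·) = fun ω => -(stoppedValue T (τ ·) ω) := by
      funext ω; simp [stoppedValue]
    rw [hsv0, hsvτ] at heval
    have hint_sv : Integrable (stoppedValue T (τ ·)) μ :=
      integrable_stoppedValue ℕ hτst hT_int (fun ω => WithTop.coe_le_coe.2 (hτ_le ω))
    have hsv_le_one : ∫ ω, stoppedValue T (τ ·) ω ∂μ ≤ 1 := by
      have hl : ∫ _ : Ω, (-1 : ℝ) ∂μ = -1 := by simp
      have hr2 : ∫ ω, -(stoppedValue T (τ ·) ω) ∂μ = -∫ ω, stoppedValue T (τ ·) ω ∂μ :=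
        integral_neg _
      rw [hl, hr2] at heval
      linarith
    have hsv_nonneg : 0 ≤ᵐ[μ] stoppedValue T (τ ·) :=
      Filter.Eventually.of_forall fun ω => hT_nonneg _ _
    have hlow : ∀ ω ∈ A N, r⁻¹ ≤ stoppedValue T (τ ·) ω := by
      intro ω hω
      rw [hA_def] at hω
      simp only [Set.mem_iUnion, Set.mem_setOf_eq, exists_prop] at hω
      obtain ⟨n, hn, hωn⟩ := hω
      have hex : ∃ j ∈ Set.Icc 1 N, Z j ω ∈ Set.Iio (0 : ℝ) := by
        refine ⟨n, hn, ?_⟩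
        simp only [hZ_def, Set.mem_Iio]
        linarith
      have hmem : Z (τ ω) ω ∈ Set.Iio (0 : ℝ) := hittingBtwn_mem_set hex
      have hτ1 : 1 ≤ τ ω := le_hittingBtwn hN1 ω
      have h1 : r⁻¹ ≤ r⁻¹ ^ τ ω := by
        calc r⁻¹ = r⁻¹ ^ 1 := (pow_one _).symm
          _ ≤ r⁻¹ ^ τ ω := pow_le_pow_right₀ hr_inv1 hτ1
      have h2 : (1 : ℝ) ≤ Real.exp (-(b * (X (τ ω) ω - x - δ * (τ ω)))) := by
        have hZ0 : X (τ ω) ω - x - δ * (τ ω) < 0 := hmem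
        have : 0 ≤ -(b * (X (τ ω) ω - x - δ * (τ ω))) := by nlinarith
        exact Real.one_le_exp this
      have : r⁻¹ * 1 ≤ r⁻¹ ^ τ ω * Real.exp (-(b * (X (τ ω) ω - x - δ * (τ ω)))) :=
        mul_le_mul h1 h2 (by norm_num) (by positivity)
      show r⁻¹ ≤ T (τ ω) ω
      simpa [hT_def] using this
    have hlb : r⁻¹ * (μ (A N)).toReal ≤ ∫ ω, stoppedValue T (τ ·) ω ∂μ :=
      le_trans ((le_of_eq (show r⁻¹ * (μ (A N)).toReal = μ.real (A N) • r⁻¹ by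
        rw [smul_eq_mul, mul_comm]; rfl)).trans (setIntegral_ge_of_const_le (hA_meas N) (measure_ne_top μ _) hlow
        hint_sv.integrableOn)) (setIntegral_le_integral hint_sv hsv_nonneg)
    have htoR : (μ (A N)).toReal ≤ r := by
      have h3 : r⁻¹ * (μ (A N)).toReal ≤ 1 := le_trans hlb hsv_le_one
      have h4 := mul_le_mul_of_nonneg_left h3 hr_pos.le
      rw [← mul_assoc, mul_inv_cancel₀ hr_pos.ne', one_mul, mul_one] at h4
      exact h4
    calc μ (A N) = ENNReal.ofReal ((μ (A N)).toReal) :=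
          (ENNReal.ofReal_toReal (measure_ne_top μ _)).symm
      _ ≤ ENNReal.ofReal r := ENNReal.ofReal_le_ofReal htoR
  -- conclusion
  set E : Set Ω := {ω | ∀ n : ℕ, 1 ≤ n → x + n * δ ≤ X n ω} with hE_def
  have hE_meas : MeasurableSet E := by
    have : E = ⋂ (n : ℕ), ⋂ (_ : 1 ≤ n), {ω | x + n * δ ≤ X n ω} := by
      ext ω; simp [hE_def]
    rw [this]
    exact MeasurableSet.iInter fun n => MeasurableSet.iInter fun _ =>
      measurableSet_le measurable_const (hMeasX n)
  have hEc : Eᶜ = ⋃ N, A N := by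
    ext ω
    simp only [hE_def, hA_def, Set.mem_compl_iff, Set.mem_setOf_eq, Set.mem_iUnion,
      Set.mem_Icc, exists_prop, not_forall]
    constructor
    · rintro ⟨n, hn, hlt⟩
      exact ⟨n, n, ⟨hn, le_rfl⟩, by push_neg at hlt; linarith [hlt]⟩
    · rintro ⟨N, n, ⟨h1n, _⟩, hlt⟩
      exact ⟨n, h1n, by push_neg; linarith⟩
  have hcompl : μ Eᶜ ≤ ENNReal.ofReal r := by
    rw [hEc]
    have hmono : Monotone A := by
      intro i j hij
      exact Set.biUnion_subset_biUnion_left (Set.Icc_subset_Icc_right hij)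
    rw [hmono.directed_le.measure_iUnion]
    refine iSup_le fun N => ?_
    rcases Nat.eq_zero_or_pos N with h0 | h1
    · subst h0
      have hIcc : Set.Icc 1 0 = (∅ : Set ℕ) := Set.Icc_eq_empty (by norm_num)
      have : A 0 = ∅ := by rw [hA_def]; simp [hIcc]
      simp [this]
    · exact hAbound N h1
  by_contra hcon
  push_neg at hcon
  have hE0 : μ E = 0 := le_antisymm hcon zero_le
  have h1c : μ Eᶜ = 1 := by
    rw [measure_compl hE_meas (measure_ne_top μ _), hE0, measure_univ, tsub_zero]
  rw [h1c] at hcompl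
  have hlt : ENNReal.ofReal r < 1 := ENNReal.ofReal_lt_one.2 hr_lt1
  exact absurd (lt_of_le_of_lt hcompl hlt) (lt_irrefl _)

/-- a strong submartingale with uniformly bounded increments
(`|X_n − X_{n−1}| ≤ a` and `E(X_n − X_{n−1} | F_{n−1}) ≥ ε > 0`) drifts linearly with
positive probability: there is `δ₁ > 0` such that for every `0 < δ < δ₁` the stopping
time `τ(δ) = inf{n ≥ 1 : X_n < x + nδ}` is infinite with positive probability. -/
theorem stmt_7 {Ω : Type*} {mΩ : MeasurableSpace Ω} {μ : Measure Ω}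
    [IsProbabilityMeasure μ] (F : Filtration ℕ mΩ)
    (X : ℕ → Ω → ℝ) (hadp : Adapted F X)
    (hint : ∀ n, Integrable (X n) μ)
    (x a ε : ℝ) (ha : 0 < a) (hε : 0 < ε)
    (hX0 : ∀ ω, X 0 ω = x)
    (hbdd : ∀ n : ℕ, ∀ᵐ ω ∂μ, |X (n + 1) ω - X n ω| ≤ a)
    (hsub : ∀ n : ℕ, ∀ᵐ ω ∂μ,
      ε ≤ (μ[(fun ω' => X (n + 1) ω' - X n ω') | F n]) ω) :
    ∃ δ₁ > 0, ∀ δ, 0 < δ → δ < δ₁ →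
      0 < μ {ω | ∀ n : ℕ, 1 ≤ n → x + n * δ ≤ X n ω} := by
  classical
  -- ε ≤ a
  have hεa : ε ≤ a := by
    have h1 : ∀ᵐ ω ∂μ, (μ[(fun ω' => X (0 + 1) ω' - X 0 ω') | F 0]) ω ≤ a := by
      have hmono := condExp_mono (m := (F 0 : MeasurableSpace Ω))
        ((hint 1).sub (hint 0)) (integrable_const a)
        ((hbdd 0).mono fun ω hω => (abs_le.1 hω).2)
      have hconst : μ[(fun _ : Ω => a) | F 0] = fun _ => a := condExp_const (F.le 0) a
      filter_upwards [hmono] with ω hω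
      rw [hconst] at hω; exact hω
    obtain ⟨ω, h2, h3⟩ := ((hsub 0).and h1).exists
    exact h2.trans h3
  -- constants
  obtain ⟨b, hb_pos, hba, hba2, hρ_pos, hρ_eq⟩ :
      ∃ b : ℝ, 0 < b ∧ b * a ≤ 1 / 2 ∧ b * a ^ 2 = ε / 2 ∧
        0 < 1 - ε ^ 2 / (4 * a ^ 2) ∧
        1 - ε ^ 2 / (4 * a ^ 2) = 1 - b * ε + b ^ 2 * a ^ 2 := by
    refine ⟨ε / (2 * a ^ 2), by positivity, ?_, by field_simp, ?_, by field_simp; ring⟩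
    · rw [div_mul_eq_mul_div, div_le_div_iff₀ (by positivity) (by norm_num)]
      nlinarith
    · have : ε ^ 2 / (4 * a ^ 2) ≤ 1 / 4 := by
        rw [div_le_div_iff₀ (by positivity) (by norm_num)]; nlinarith
      linarith
  set ρ : ℝ := 1 - ε ^ 2 / (4 * a ^ 2) with hρ_def
  have hkey := stmt7_key F X hadp hint a ε b ρ ha hε hb_pos hba hρ_eq
    (fun n ω => X (n + 1) ω - X n ω) rfl hbdd hsub
  have hE_int : ∀ n : ℕ, Integrable (fun ω => Real.exp (-(b * (X (n + 1) ω - X n ω)))) μ := by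
    intro n
    have hYm : StronglyMeasurable (fun ω => X (n + 1) ω - X n ω) :=
      ((hadp.stronglyAdapted (n + 1)).mono (F.le _)).sub ((hadp.stronglyAdapted n).mono (F.le _))
    have hEm : StronglyMeasurable (fun ω => Real.exp (-(b * (X (n + 1) ω - X n ω)))) :=
      Real.continuous_exp.comp_stronglyMeasurable ((hYm.const_mul b).neg)
    refine Integrable.mono' (integrable_const (Real.exp (b * a))) hEm.aestronglyMeasurable ?_
    filter_upwards [hbdd n] with ω hω
    rw [Real.norm_eq_abs, Real.abs_exp]
    refine Real.exp_le_exp.2 ?_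
    have := abs_le.1 hω
    nlinarith
  refine ⟨ε / 2, by positivity, fun δ hδ0 hδ1 => ?_⟩
  have hbδρ : b * δ < 1 - ρ := by
    have h3 : b ^ 2 * a ^ 2 = b * (ε / 2) := by rw [← hba2]; ring
    have h4 : b * δ < b * (ε / 2) := mul_lt_mul_of_pos_left hδ1 hb_pos
    linarith [hρ_eq]
  exact stmt7_main F X hadp hint x a ε b ρ δ ha hε hb_pos hρ_pos hX0 hbdd hkey hE_int hδ0 hbδρ
end

section
/- Let (X_n) be adapted to (F_n) with X_0 = x, increments Y_n = X_n − X_{n−1} bounded by |Y_n| ≤ a, and E(Y_n | F_{n−1}) ≥ ε > 0 a.s. Then for h ∈ (0, min(1/a, 2ε/(3a²))) and δ < (hε − 3h²a²/2)/h, there is δ₃ > 0 such that P(X_n < x + δn) ≤ exp(−nδ₃) for all n ≥ 1. -/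
open MeasureTheory


lemma aux_exp_quad {z : ℝ} (hz : |z| ≤ 1) : Real.exp z ≤ 1 + z + (3/2) * z ^ 2 := by
  have h := Real.exp_bound hz (n := 2) (by norm_num)
  simp [Finset.sum_range_succ] at h
  have h2 := abs_le.mp h
  have : |z| ^ 2 = z ^ 2 := sq_abs z
  nlinarith [h2.2]

set_option maxHeartbeats 1000000 in
/-- exponential Chernoff bound for a strong submartingale with bounded
increments: for `h ∈ (0, min(1/a, 2ε/(3a²)))` and `δ < (hε − 3h²a²/2)/h` there is
`δ₃ > 0` with `P(X_n < x + nδ) ≤ exp(−nδ₃)` for all `n ≥ 1`. -/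
theorem stmt_8 {Ω : Type*} {mΩ : MeasurableSpace Ω} {μ : Measure Ω}
    [IsProbabilityMeasure μ] (F : Filtration ℕ mΩ)
    (X : ℕ → Ω → ℝ) (hadp : Adapted F X)
    (hint : ∀ n, Integrable (X n) μ)
    (x a ε : ℝ) (ha : 0 < a) (hε : 0 < ε)
    (hX0 : ∀ ω, X 0 ω = x)
    (hbdd : ∀ n : ℕ, ∀ᵐ ω ∂μ, |X (n + 1) ω - X n ω| ≤ a)
    (hsub : ∀ n : ℕ, ∀ᵐ ω ∂μ,
      ε ≤ (μ[(fun ω' => X (n + 1) ω' - X n ω') | F n]) ω)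
    (h δ : ℝ) (hh0 : 0 < h) (hh1 : h < min (1 / a) (2 * ε / (3 * a ^ 2)))
    (hδ : δ < (h * ε - 3 * h ^ 2 * a ^ 2 / 2) / h) :
    ∃ δ₃ > 0, ∀ n : ℕ, 1 ≤ n →
      μ {ω | X n ω < x + n * δ} ≤ ENNReal.ofReal (Real.exp (-(n * δ₃))) := by
  -- basic constants
  have hha : h * a < 1 := by
    have h1 := lt_of_lt_of_le hh1 (min_le_left _ _)
    rw [lt_div_iff₀ ha] at h1
    exact h1
  have hc : 0 < h * ε - 3 * h ^ 2 * a ^ 2 / 2 := by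
    have h2 := lt_of_lt_of_le hh1 (min_le_right _ _)
    rw [lt_div_iff₀ (by positivity)] at h2
    have h3 := mul_lt_mul_of_pos_left h2 hh0
    nlinarith
  have hYint : ∀ n : ℕ, Integrable (fun ω => X (n + 1) ω - X n ω) μ :=
    fun n => (hint (n + 1)).sub (hint n)
  -- ε ≤ a
  have hεa : ε ≤ a := by
    have h1 : ε ≤ ∫ ω, (μ[(fun ω' => X (0 + 1) ω' - X 0 ω') | F 0]) ω ∂μ := by
      calc ε = ∫ _, ε ∂μ := by simp
        _ ≤ _ := integral_mono_ae (integrable_const _) integrable_condExp (hsub 0)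
    rw [integral_condExp (F.le 0)] at h1
    have h2 : ∫ ω, (X (0 + 1) ω - X 0 ω) ∂μ ≤ a := by
      calc ∫ ω, (X (0 + 1) ω - X 0 ω) ∂μ ≤ ∫ _, a ∂μ := by
            refine integral_mono_ae (hYint 0) (integrable_const _) ?_
            filter_upwards [hbdd 0] with ω hω
            exact le_trans (le_abs_self _) hω
        _ = a := by simp
    exact le_trans h1 h2
  set q : ℝ := 1 - (h * ε - 3 * h ^ 2 * a ^ 2 / 2) with hq_def
  have hq0 : 0 < q := by
    have h4 := mul_le_mul_of_nonneg_left hεa hh0.le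
    rw [hq_def]
    nlinarith [sq_nonneg (h * a)]
  have hqexp : q ≤ Real.exp (-(h * ε - 3 * h ^ 2 * a ^ 2 / 2)) := by
    have := Real.add_one_le_exp (-(h * ε - 3 * h ^ 2 * a ^ 2 / 2))
    rw [hq_def]; linarith
  clear_value q
  -- the exponential process
  set Z : ℕ → Ω → ℝ := fun n ω => Real.exp (-h * (X n ω - x)) with hZ_def
  have hZmeas : ∀ n, StronglyMeasurable[F n] (Z n) := by
    intro n
    rw [hZ_def]
    exact Real.continuous_exp.comp_stronglyMeasurable
      (((hadp n).sub measurable_const).const_mul (-h)).stronglyMeasurable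
  clear_value Z
  have hZaesm : ∀ n, AEStronglyMeasurable (Z n) μ := fun n =>
    ((hZmeas n).mono (F.le n)).aestronglyMeasurable
  have hXbdd : ∀ n : ℕ, ∀ᵐ ω ∂μ, |X n ω - x| ≤ n * a := by
    intro n
    induction n with
    | zero => simp [hX0]
    | succ n ih =>
      filter_upwards [hbdd n, ih] with ω h1 h2
      have h3 := abs_sub_le (X (n + 1) ω) (X n ω) x
      push_cast
      nlinarith
  have hZbdd : ∀ n, ∀ᵐ ω ∂μ, ‖Z n ω‖ ≤ Real.exp (h * (n * a)) := by
    intro n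
    filter_upwards [hXbdd n] with ω hω
    rw [hZ_def, Real.norm_eq_abs, abs_of_pos (Real.exp_pos _), Real.exp_le_exp]
    nlinarith [neg_abs_le (X n ω - x), abs_nonneg (X n ω - x)]
  have hZint : ∀ n, Integrable (Z n) μ := fun n =>
    Integrable.mono' (integrable_const _) (hZaesm n) (hZbdd n)
  have hZ0 : Z 0 = fun _ => (1 : ℝ) := by rw [hZ_def]; funext ω; simp [hX0]
  -- the one-step factor
  set W : ℕ → Ω → ℝ := fun n ω => Real.exp (-h * (X (n + 1) ω - X n ω)) with hW_def
  have hWaesm : ∀ n, AEStronglyMeasurable (W n) μ := by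
    intro n
    rw [hW_def]
    exact (Real.continuous_exp.comp_stronglyMeasurable
      ((((hadp (n + 1)).mono (F.le (n + 1)) le_rfl).sub
        ((hadp n).mono (F.le n) le_rfl)).const_mul (-h)).stronglyMeasurable).aestronglyMeasurable
  have hZW : ∀ n, Z (n + 1) = Z n * W n := by
    intro n
    rw [hZ_def, hW_def]
    funext ω
    simp only [Pi.mul_apply, ← Real.exp_add]
    ring_nf
  have hWbdd : ∀ n, ∀ᵐ ω ∂μ, ‖W n ω‖ ≤ Real.exp (h * a) := by
    intro n
    filter_upwards [hbdd n] with ω hω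
    rw [hW_def, Real.norm_eq_abs, abs_of_pos (Real.exp_pos _), Real.exp_le_exp]
    nlinarith [neg_abs_le (X (n + 1) ω - X n ω), abs_nonneg (X (n + 1) ω - X n ω)]
  have hWint : ∀ n, Integrable (W n) μ := fun n =>
    Integrable.mono' (integrable_const _) (hWaesm n) (hWbdd n)
  -- pointwise quadratic bound on W
  have hWquad : ∀ n, W n ≤ᵐ[μ]
      fun ω => (1 + 3/2 * h ^ 2 * a ^ 2) - h * (X (n + 1) ω - X n ω) := by
    intro n
    filter_upwards [hbdd n] with ω hω
    set Yω : ℝ := X (n + 1) ω - X n ω with hYω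
    clear_value Yω
    have hz : |(-h) * Yω| ≤ 1 := by
      rw [abs_mul, abs_neg, abs_of_pos hh0]
      nlinarith
    have h5 := aux_exp_quad hz
    have hY2 : Yω ^ 2 ≤ a ^ 2 := by nlinarith [abs_nonneg Yω, sq_abs Yω]
    show W n ω ≤ _
    simp only [hW_def]
    rw [← hYω]
    nlinarith [h5, mul_le_mul_of_nonneg_left hY2 (sq_nonneg h)]
  clear_value W
  -- conditional expectation bound on W
  have hcondW : ∀ n, (μ[W n | F n]) ≤ᵐ[μ] fun _ => q := by
    intro n
    have hgint : Integrable (fun ω => (1 + 3/2 * h ^ 2 * a ^ 2) - h * (X (n + 1) ω - X n ω)) μ :=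
      (integrable_const _).sub ((hYint n).const_mul h)
    have h1 : (μ[W n | F n]) ≤ᵐ[μ]
        (μ[fun ω => (1 + 3/2 * h ^ 2 * a ^ 2) - h * (X (n + 1) ω - X n ω) | F n]) :=
      condExp_mono (hWint n) hgint (hWquad n)
    have h2 : (μ[fun ω => (1 + 3/2 * h ^ 2 * a ^ 2) - h * (X (n + 1) ω - X n ω) | F n]) =ᵐ[μ]
        fun ω => (1 + 3/2 * h ^ 2 * a ^ 2)
          - h * (μ[(fun ω' => X (n + 1) ω' - X n ω') | F n]) ω := by
      have e1 : (fun ω => (1 + 3/2 * h ^ 2 * a ^ 2) - h * (X (n + 1) ω - X n ω))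
          = (fun _ => (1 + 3/2 * h ^ 2 * a ^ 2 : ℝ))
            - h • (fun ω => X (n + 1) ω - X n ω) := by
        funext ω; simp [smul_eq_mul]
      rw [e1]
      refine (condExp_sub (integrable_const _) ((hYint n).smul h) (F n)).trans ?_
      have e2 := condExp_smul (μ := μ) (m := F n) h (fun ω => X (n + 1) ω - X n ω)
      have e3 : (μ[fun _ => (1 + 3/2 * h ^ 2 * a ^ 2 : ℝ) | F n])
          = fun _ => (1 + 3/2 * h ^ 2 * a ^ 2 : ℝ) := condExp_const (F.le n) _
      filter_upwards [e2] with ω hω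
      simp only [Pi.sub_apply, e3, hω, Pi.smul_apply, smul_eq_mul]
    filter_upwards [h1, h2, hsub n] with ω ha1 ha2 ha3
    rw [ha2] at ha1
    have h4 : h * ε ≤ h * (μ[(fun ω' => X (n + 1) ω' - X n ω') | F n]) ω :=
      mul_le_mul_of_nonneg_left ha3 hh0.le
    rw [hq_def]
    linarith
  -- one-step integral bound
  have hstep : ∀ n, ∫ ω, Z (n + 1) ω ∂μ ≤ q * ∫ ω, Z n ω ∂μ := by
    intro n
    have hZWint : Integrable (Z n * W n) μ := by rw [← hZW]; exact hZint (n + 1)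
    have e2 : ∫ ω, (Z n * W n) ω ∂μ = ∫ ω, (μ[Z n * W n | F n]) ω ∂μ :=
      (integral_condExp (F.le n)).symm
    have e3 : (μ[Z n * W n | F n]) =ᵐ[μ] Z n * μ[W n | F n] :=
      condExp_mul_of_stronglyMeasurable_left (hZmeas n) hZWint (hWint n)
    have hint1 : Integrable (fun ω => Z n ω * (μ[W n | F n]) ω) μ :=
      Integrable.bdd_mul integrable_condExp (hZaesm n) (hZbdd n)
    have e4 : ∫ ω, (μ[Z n * W n | F n]) ω ∂μ = ∫ ω, Z n ω * (μ[W n | F n]) ω ∂μ :=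
      integral_congr_ae e3
    have e5 : ∫ ω, Z n ω * (μ[W n | F n]) ω ∂μ ≤ ∫ ω, Z n ω * q ∂μ := by
      refine integral_mono_ae hint1 ((hZint n).mul_const q) ?_
      filter_upwards [hcondW n, hZbdd n] with ω hω hbω
      have hZpos : 0 ≤ Z n ω := by
        have := abs_nonneg (Z n ω)
        by_contra hcon
        push_neg at hcon
        rw [hZ_def] at hcon
        exact absurd hcon (not_lt.2 (Real.exp_pos _).le)
      exact mul_le_mul_of_nonneg_left hω hZpos
    have e6 : ∫ ω, Z n ω * q ∂μ = q * ∫ ω, Z n ω ∂μ := by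
      rw [integral_mul_const]; ring
    calc ∫ ω, Z (n + 1) ω ∂μ = ∫ ω, (Z n * W n) ω ∂μ := by rw [hZW]
      _ = ∫ ω, (μ[Z n * W n | F n]) ω ∂μ := e2
      _ = ∫ ω, Z n ω * (μ[W n | F n]) ω ∂μ := e4
      _ ≤ ∫ ω, Z n ω * q ∂μ := e5
      _ = q * ∫ ω, Z n ω ∂μ := e6
  -- iterate
  have hiter : ∀ n, ∫ ω, Z n ω ∂μ ≤ q ^ n := by
    intro n
    induction n with
    | zero => rw [hZ0]; simp
    | succ n ih =>
      calc ∫ ω, Z (n + 1) ω ∂μ ≤ q * ∫ ω, Z n ω ∂μ := hstep n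
        _ ≤ q * q ^ n := mul_le_mul_of_nonneg_left ih hq0.le
        _ = q ^ (n + 1) := by ring
  -- conclusion
  refine ⟨(h * ε - 3 * h ^ 2 * a ^ 2 / 2) - h * δ,
    by rw [lt_div_iff₀ hh0] at hδ; linarith, fun n hn => ?_⟩
  have ht : (0:ℝ) < Real.exp (-(h * (n * δ))) := Real.exp_pos _
  have hsubset : {ω | X n ω < x + n * δ} ⊆ {ω | Real.exp (-(h * (n * δ))) ≤ Z n ω} := by
    intro ω hω
    simp only [Set.mem_setOf_eq] at hω ⊢
    rw [hZ_def, Real.exp_le_exp]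
    nlinarith [mul_lt_mul_of_pos_left (show X n ω - x < n * δ by linarith) hh0]
  have hmarkov := mul_meas_ge_le_integral_of_nonneg (μ := μ) (f := Z n)
    (by rw [hZ_def]; exact Filter.Eventually.of_forall fun ω => (Real.exp_pos _).le)
    (hZint n) (Real.exp (-(h * (n * δ))))
  have h5 : (μ {ω | X n ω < x + n * δ}).toReal
      ≤ (μ {ω | Real.exp (-(h * (n * δ))) ≤ Z n ω}).toReal :=
    ENNReal.toReal_mono (measure_ne_top _ _) (measure_mono hsubset)
  have h6 : (μ {ω | Real.exp (-(h * (n * δ))) ≤ Z n ω}).toReal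
      ≤ Real.exp (-(n * ((h * ε - 3 * h ^ 2 * a ^ 2 / 2) - h * δ))) := by
    have h7 : (μ {ω | Real.exp (-(h * (n * δ))) ≤ Z n ω}).toReal
        ≤ (∫ ω, Z n ω ∂μ) / Real.exp (-(h * (n * δ))) := by
      rw [le_div_iff₀ ht]
      simp only [measureReal_def] at hmarkov
      linarith [hmarkov]
    have h8 : (∫ ω, Z n ω ∂μ) / Real.exp (-(h * (n * δ)))
        ≤ Real.exp (-(n * (h * ε - 3 * h ^ 2 * a ^ 2 / 2))) / Real.exp (-(h * (n * δ))) := by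
      gcongr
      calc ∫ ω, Z n ω ∂μ ≤ q ^ n := hiter n
        _ ≤ (Real.exp (-(h * ε - 3 * h ^ 2 * a ^ 2 / 2))) ^ n :=
            pow_le_pow_left₀ hq0.le hqexp n
        _ = Real.exp (-(n * (h * ε - 3 * h ^ 2 * a ^ 2 / 2))) := by
            rw [← Real.exp_nat_mul]; congr 1; ring
    have h9 : Real.exp (-(n * (h * ε - 3 * h ^ 2 * a ^ 2 / 2))) / Real.exp (-(h * (n * δ)))
        = Real.exp (-(n * ((h * ε - 3 * h ^ 2 * a ^ 2 / 2) - h * δ))) := by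
      rw [← Real.exp_sub]; congr 1; ring
    linarith
  calc μ {ω | X n ω < x + n * δ}
      = ENNReal.ofReal ((μ {ω | X n ω < x + n * δ}).toReal) :=
        (ENNReal.ofReal_toReal (measure_ne_top μ _)).symm
    _ ≤ ENNReal.ofReal (Real.exp (-(n * ((h * ε - 3 * h ^ 2 * a ^ 2 / 2) - h * δ)))) :=
        ENNReal.ofReal_le_ofReal (h5.trans h6)
end

section
/- Let η₁, …, η_d be non-negative random variables with E η_i < ∞, define f(x) = ∑_{i=1}^d E(η_i^x) for x ∈ [0,1], and suppose there exists x₀ ∈ [0,1] with f(x₀) < 1. Let ξ[v] for a vertex v of the rooted d-ary tree be the product of independent copies of the η's along the path from the root to v (the copy at an edge with last letter j is distributed like η_j, copies at different edges of a path being independent). Then ∑_{v ∈ V} ξ[v] < ∞ almost surely, where the sum is over all vertices of the infinite d-ary tree. -/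
open MeasureTheory Finset

open scoped ENNReal

/-- Expectation of a product of independent `ℝ≥0∞`-valued random variables. -/
lemma lintegral_finset_prod_of_iIndepFun {Ω ι : Type*} {mΩ : MeasurableSpace Ω}
    {μ : Measure Ω} [IsProbabilityMeasure μ] (f : ι → Ω → ℝ≥0∞)
    (hmeas : ∀ i, Measurable (f i))
    (hind : ProbabilityTheory.iIndepFun f μ) (s : Finset ι) :
    ∫⁻ ω, ∏ i ∈ s, f i ω ∂μ = ∏ i ∈ s, ∫⁻ ω, f i ω ∂μ := by
  classical
  induction s using Finset.induction with
  | empty => simp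
  | @insert i s hi ih =>
    have hps : Measurable (∏ j ∈ s, f j) := by
      have : Measurable fun ω => ∏ j ∈ s, f j ω :=
        Finset.measurable_prod _ fun j _ => hmeas j
      have hfun : (∏ j ∈ s, f j) = fun ω => ∏ j ∈ s, f j ω :=
        funext fun ω => Finset.prod_apply _ _ _
      rw [hfun]; exact this
    have hIF : ProbabilityTheory.IndepFun (∏ j ∈ s, f j) (f i) μ :=
      hind.indepFun_finsetProd_of_notMem hmeas hi
    have hmul := ProbabilityTheory.lintegral_mul_eq_lintegral_mul_lintegral_of_indepFun
      hps (hmeas i) hIF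
    simp only [Finset.prod_insert hi]
    have : (fun ω => f i ω * ∏ j ∈ s, f j ω) = (∏ j ∈ s, f j) * f i := by
      funext ω
      simp [Finset.prod_apply, mul_comm]
    calc ∫⁻ ω, f i ω * ∏ j ∈ s, f j ω ∂μ
        = ∫⁻ ω, ((∏ j ∈ s, f j) * f i) ω ∂μ := by rw [this]
      _ = (∫⁻ ω, (∏ j ∈ s, f j) ω ∂μ) * ∫⁻ ω, f i ω ∂μ := hmul
      _ = (∫⁻ ω, f i ω ∂μ) * ∏ j ∈ s, ∫⁻ ω, f j ω ∂μ := by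
          rw [mul_comm]
          congr 1
          rw [← ih]
          simp [Finset.prod_apply]

/-- subcriticality implies a.s. finiteness of the total chaos sum.
Vertices of the rooted `d`-ary tree are encoded as lists over `Fin d`, written in
reverse (the head of the list is the last letter of the vertex); the edge indexed by
a nonempty vertex `v` carries a random variable `ξa v` distributed like `η v.headI`,
the variables along any root-to-vertex path being independent.  If
`f(x₀) = ∑_i E(η_i^{x₀}) < 1` for some `x₀ ∈ [0,1]`, then
`∑_{v} ξ[v] < ∞` almost surely, where `ξ[v] = ∏_{edges of the path to v} ξa`. -/
theorem stmt_10 {Ω : Type*} {mΩ : MeasurableSpace Ω} {μ : Measure Ω}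
    [IsProbabilityMeasure μ] (d : ℕ) [NeZero d]
    (η : Fin d → Ω → ℝ)
    (hηmeas : ∀ i, Measurable (η i)) (hηpos : ∀ i ω, 0 ≤ η i ω)
    (hηint : ∀ i, Integrable (η i) μ)
    (x₀ : ℝ) (hx₀ : x₀ ∈ Set.Icc (0 : ℝ) 1)
    (hsub : ∑ i, ∫⁻ ω, ENNReal.ofReal (η i ω ^ x₀) ∂μ < 1)
    (ξa : List (Fin d) → Ω → ℝ)
    (hξmeas : ∀ v, Measurable (ξa v))
    (hξpos : ∀ v ω, 0 ≤ ξa v ω)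
    (hlaw : ∀ v : List (Fin d), v ≠ [] →
      Measure.map (ξa v) μ = Measure.map (η v.headI) μ)
    (hindep : ∀ v : List (Fin d),
      ProbabilityTheory.iIndepFun
        (fun k : Fin v.length => ξa (v.drop k)) μ) :
    ∀ᵐ ω ∂μ, Summable (fun v : List (Fin d) =>
      ∏ k ∈ Finset.range v.length, ξa (v.drop k) ω) := by
  classical
  obtain ⟨hx0, hx1⟩ := hx₀
  set c : Fin d → ℝ≥0∞ := fun i => ∫⁻ ω, ENNReal.ofReal (η i ω ^ x₀) ∂μ with hc
  set r : ℝ≥0∞ := ∑ i, c i with hrdef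
  have hr : r < 1 := hsub
  set φ : ℝ → ℝ≥0∞ := fun t => ENNReal.ofReal (t ^ x₀) with hφdef
  have hφ : Measurable φ := (Real.continuous_rpow_const hx0).measurable.ennreal_ofReal
  have hedge : ∀ w : List (Fin d), w ≠ [] → ∫⁻ ω, φ (ξa w ω) ∂μ = c w.headI := by
    intro w hw
    calc ∫⁻ ω, φ (ξa w ω) ∂μ = ∫⁻ t, φ t ∂(Measure.map (ξa w) μ) :=
          (lintegral_map hφ (hξmeas w)).symm
      _ = ∫⁻ t, φ t ∂(Measure.map (η w.headI) μ) := by rw [hlaw w hw]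
      _ = c w.headI := lintegral_map hφ (hηmeas _)
  have hXmeas : ∀ v : List (Fin d),
      Measurable (fun ω => ∏ k ∈ Finset.range v.length, ξa (v.drop k) ω) :=
    fun v => Finset.measurable_prod _ fun k _ => hξmeas _
  have hXpos : ∀ (v : List (Fin d)) ω, 0 ≤ ∏ k ∈ Finset.range v.length, ξa (v.drop k) ω :=
    fun v ω => Finset.prod_nonneg fun k _ => hξpos _ ω
  have hpoint : ∀ (v : List (Fin d)) (ω : Ω),
      φ (∏ k ∈ Finset.range v.length, ξa (v.drop k) ω)
        = ∏ k ∈ Finset.range v.length, φ (ξa (v.drop k) ω) := by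
    intro v ω
    simp only [hφdef]
    rw [← Real.finset_prod_rpow _ _ (fun k _ => hξpos _ ω) x₀,
      ENNReal.ofReal_prod_of_nonneg (fun k _ => Real.rpow_nonneg (hξpos _ ω) x₀)]
  have hE : ∀ v : List (Fin d),
      ∫⁻ ω, φ (∏ k ∈ Finset.range v.length, ξa (v.drop k) ω) ∂μ
        = ∏ k : Fin v.length, c (v.get k) := by
    intro v
    set fam : Fin v.length → Ω → ℝ≥0∞ := fun k ω => φ (ξa (v.drop k) ω) with hfam
    have hfammeas : ∀ k, Measurable (fam k) := fun k => hφ.comp (hξmeas _)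
    have hfamind : ProbabilityTheory.iIndepFun fam μ :=
      (hindep v).comp (fun _ => φ) (fun _ => hφ)
    calc ∫⁻ ω, φ (∏ k ∈ Finset.range v.length, ξa (v.drop k) ω) ∂μ
        = ∫⁻ ω, ∏ k : Fin v.length, fam k ω ∂μ := by
          refine lintegral_congr fun ω => ?_
          rw [hpoint v ω, ← Fin.prod_univ_eq_prod_range]
      _ = ∏ k : Fin v.length, ∫⁻ ω, fam k ω ∂μ :=
          lintegral_finset_prod_of_iIndepFun fam hfammeas hfamind Finset.univ
      _ = ∏ k : Fin v.length, c (v.get k) := by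
          refine Finset.prod_congr rfl fun k _ => ?_
          have hk : (k : ℕ) < v.length := k.isLt
          have hne : v.drop k ≠ [] := by
            rw [List.drop_eq_getElem_cons hk]; simp
          rw [hfam]
          rw [hedge _ hne, List.drop_eq_getElem_cons hk]
          simp only [List.headI_cons, List.get_eq_getElem]
  set F : List (Fin d) → ℝ≥0∞ := fun v => ∏ k : Fin v.length, c (v.get k) with hF
  have hofFn : ∀ (n : ℕ) (f : Fin n → Fin d), F (List.ofFn f) = ∏ k : Fin n, c (f k) := by
    intro n f
    have hlen : (List.ofFn f).length = n := List.length_ofFn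
    calc F (List.ofFn f)
        = ∏ k : Fin (List.ofFn f).length, c (f (finCongr hlen k)) := by
          refine Finset.prod_congr rfl fun k _ => ?_
          rw [List.get_ofFn]
          rfl
      _ = ∏ k : Fin n, c (f k) := Equiv.prod_comp (finCongr hlen) fun j => c (f j)
  have htotal : ∑' v : List (Fin d), F v = ∑' n : ℕ, r ^ n := by
    rw [← Equiv.tsum_eq (List.equivSigmaTuple (α := Fin d)).symm F]
    rw [ENNReal.tsum_sigma']
    refine tsum_congr fun n => ?_
    rw [tsum_fintype]
    calc ∑ f : Fin n → Fin d, F ((List.equivSigmaTuple (α := Fin d)).symm ⟨n, f⟩)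
        = ∑ f : Fin n → Fin d, ∏ k : Fin n, c (f k) :=
          Finset.sum_congr rfl fun f _ => hofFn n f
      _ = ∏ _k : Fin n, ∑ j : Fin d, c j := by
          rw [Finset.prod_univ_sum, Fintype.piFinset_univ]
      _ = r ^ n := by simp [hrdef]
  have hrt : ∑' n : ℕ, r ^ n ≠ ⊤ := by
    rw [ENNReal.tsum_geometric]
    exact (ENNReal.inv_lt_top.2 (tsub_pos_of_lt hr)).ne
  have hint : ∫⁻ ω, ∑' v : List (Fin d),
      φ (∏ k ∈ Finset.range v.length, ξa (v.drop k) ω) ∂μ ≠ ⊤ := by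
    rw [lintegral_tsum (f := fun (v : List (Fin d)) ω => φ (∏ k ∈ Finset.range v.length, ξa (v.drop k) ω)) fun v => (hφ.comp (hXmeas v)).aemeasurable]
    rw [tsum_congr hE, htotal]
    exact hrt
  have hmeasG : Measurable fun ω => ∑' v : List (Fin d),
      φ (∏ k ∈ Finset.range v.length, ξa (v.drop k) ω) :=
    Measurable.ennreal_tsum fun v => hφ.comp (hXmeas v)
  filter_upwards [ae_lt_top hmeasG hint] with ω hω
  set X : List (Fin d) → ℝ := fun v => ∏ k ∈ Finset.range v.length, ξa (v.drop k) ω with hX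
  set g : List (Fin d) → ℝ≥0∞ := fun v => ENNReal.ofReal (X v) with hg
  have hωne : ∑' v : List (Fin d), φ (X v) ≠ ⊤ := hω.ne
  have hA : {v : List (Fin d) | 1 ≤ φ (X v)}.Finite :=
    ENNReal.finite_const_le_of_tsum_ne_top hωne one_ne_zero
  have hterm : ∀ v, g v ≤ Set.indicator {v : List (Fin d) | 1 ≤ φ (X v)} g v + φ (X v) := by
    intro v
    by_cases hv : v ∈ {v : List (Fin d) | 1 ≤ φ (X v)}
    · rw [Set.indicator_of_mem hv]; exact le_self_add
    · rw [Set.indicator_of_notMem hv, zero_add]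
      have hXv : X v ≤ 1 := by
        by_contra hgt
        push_neg at hgt
        exact hv (ENNReal.one_le_ofReal.2 (Real.one_le_rpow hgt.le hx0))
      show ENNReal.ofReal (X v) ≤ ENNReal.ofReal (X v ^ x₀)
      have h0 : 0 ≤ X v := hXpos v ω
      rcases eq_or_lt_of_le h0 with h | h
      · rw [← h]; simp
      · refine ENNReal.ofReal_le_ofReal ?_
        simpa using Real.rpow_le_rpow_of_exponent_ge h hXv hx1
  have hgsum : ∑' v : List (Fin d), g v ≠ ⊤ := by
    have h1 : ∑' v : List (Fin d), g v
        ≤ (∑' v : List (Fin d), Set.indicator {v : List (Fin d) | 1 ≤ φ (X v)} g v)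
          + ∑' v : List (Fin d), φ (X v) := by
      refine le_trans (ENNReal.tsum_le_tsum hterm) ?_
      rw [ENNReal.tsum_add]
    have h2 : ∑' v : List (Fin d), Set.indicator {v : List (Fin d) | 1 ≤ φ (X v)} g v
        = ∑ v ∈ hA.toFinset, Set.indicator {v : List (Fin d) | 1 ≤ φ (X v)} g v := by
      refine tsum_eq_sum fun v hv => ?_
      exact Set.indicator_of_notMem (fun h => hv (hA.mem_toFinset.2 h)) g
    refine (lt_of_le_of_lt h1 ?_).ne
    apply ENNReal.add_lt_top.2
    constructor
    · rw [h2]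
      refine ENNReal.sum_lt_top.2 fun v _ => ?_
      refine lt_of_le_of_lt (Set.indicator_le_self _ _ v) ?_
      exact ENNReal.ofReal_lt_top
    · exact hωne.lt_top
  have hs := ENNReal.summable_toReal hgsum
  refine hs.congr fun v => ?_
  exact ENNReal.toReal_ofReal (hXpos v ω)
end
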